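/- Let Γ = ℤ[ω] with ω = e^{2πi/3} be the hexagonal lattice in ℂ, and let L = ⋃_{k=0}^{m−1}(x_k + Γ) be a point packing with all shift vectors x_k ∈ ℚ(ω). Then every similarity isometry of Γ (rotation or reflection) is a similarity isometry of L; in particular OS(L) = OS(Γ). -/
import Mathlib

private lemma stmt13_aux (r : ℚ) (n : ℕ) (h : r.den ∣ n) : ∃ a : ℤ, ((n : ℚ)) * r = a := by
  obtain ⟨c, hc⟩ := h
  refine ⟨c * r.num, ?_⟩
  have := Rat.mul_den_eq_num r
  push_cast [hc]
  rw [mul_comm (r.den : ℚ) (c : ℚ), mul_assoc, mul_comm (r.den : ℚ) r, this]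

/-- Proposition 4.1 (hexagonal lattice case): for a point packing L generated by ℤ[ω],
ω = e^{2πi/3}, with shift vectors in ℚ(ω), every similarity isometry of ℤ[ω] is a
similarity isometry of L, and OS(L) = OS(ℤ[ω]). -/
theorem stmt13 (m : ℕ) (hm : 0 < m)
    (ω : ℂ) (hω : ω = Complex.exp (2 * Real.pi * Complex.I / 3))
    (G : Set ℂ) (hG : G = {z : ℂ | ∃ a b : ℤ, z = (a : ℂ) + (b : ℂ) * ω})
    (x : Fin m → ℂ)
    (h0 : x ⟨0, hm⟩ = 0)
    (hx : ∀ k : Fin m, ∃ p q : ℚ, x k = (p : ℂ) + (q : ℂ) * ω)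
    (hdist : ∀ k1 k2 : Fin m, k1 ≠ k2 → x k1 - x k2 ∉ G)
    (L : Set ℂ) (hL : L = ⋃ k : Fin m, (fun γ => x k + γ) '' G) :
    (∀ f : ℂ ≃ₗᵢ[ℝ] ℂ,
        (∃ β > (0 : ℝ), ∀ z ∈ G, β • f z ∈ G) →
        (∃ β > (0 : ℝ), ∀ z ∈ L, β • f z ∈ L)) ∧
    {f : ℂ ≃ₗᵢ[ℝ] ℂ | ∃ β > (0 : ℝ), ∀ z ∈ L, β • f z ∈ L} =
      {f : ℂ ≃ₗᵢ[ℝ] ℂ | ∃ β > (0 : ℝ), ∀ z ∈ G, β • f z ∈ G} := by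
  classical
  choose p q hpq using hx
  set N : ℕ := ∏ k : Fin m, ((p k).den * (q k).den) with hN
  have hNpos : 0 < N := by
    refine Finset.prod_pos fun k _ => ?_
    exact Nat.mul_pos (p k).pos (q k).pos
  have hNxG : ∀ k : Fin m, (N : ℂ) * x k ∈ G := by
    intro k
    have hp : (p k).den ∣ N :=
      dvd_trans (Dvd.intro _ rfl) (Finset.dvd_prod_of_mem _ (Finset.mem_univ k))
    have hq : (q k).den ∣ N :=
      dvd_trans (Dvd.intro_left ((p k).den) rfl) (Finset.dvd_prod_of_mem _ (Finset.mem_univ k))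
    obtain ⟨a, ha⟩ := stmt13_aux (p k) N hp
    obtain ⟨b, hb⟩ := stmt13_aux (q k) N hq
    have ha' : (N : ℂ) * (p k : ℂ) = (a : ℂ) := by exact_mod_cast congrArg (Rat.cast (K := ℂ)) ha
    have hb' : (N : ℂ) * (q k : ℂ) = (b : ℂ) := by exact_mod_cast congrArg (Rat.cast (K := ℂ)) hb
    rw [hG]
    exact ⟨a, b, by rw [hpq k]; rw [← ha', ← hb']; ring⟩
  have hGadd : ∀ z ∈ G, ∀ w ∈ G, z + w ∈ G := by
    rintro z hz w hw
    rw [hG] at hz hw ⊢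
    obtain ⟨a, b, rfl⟩ := hz
    obtain ⟨c, d, rfl⟩ := hw
    exact ⟨a + c, b + d, by push_cast; ring⟩
  have hGN : ∀ z ∈ G, (N : ℂ) * z ∈ G := by
    intro z hz
    rw [hG] at hz ⊢
    obtain ⟨a, b, rfl⟩ := hz
    exact ⟨(N : ℤ) * a, (N : ℤ) * b, by push_cast; ring⟩
  have hGL : G ⊆ L := by
    intro z hz
    rw [hL]
    exact Set.mem_iUnion.2 ⟨⟨0, hm⟩, ⟨z, hz, by rw [h0]; ring⟩⟩
  -- key computation: (N*β) • f z = β • f ((N:ℂ) * z)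
  have hkey : ∀ (f : ℂ ≃ₗᵢ[ℝ] ℂ) (β : ℝ) (z : ℂ),
      ((N : ℝ) * β) • f z = β • f ((N : ℂ) * z) := by
    intro f β z
    have : (N : ℂ) * z = (N : ℝ) • z := by
      rw [Complex.real_smul]; norm_num
    rw [this, f.map_smul, smul_smul, mul_comm]
  have hNL : ∀ z ∈ L, (N : ℂ) * z ∈ G := by
    intro z hz
    rw [hL] at hz
    obtain ⟨k, γ, hγ, rfl⟩ := Set.mem_iUnion.1 hz
    simp only [mul_add]
    exact hGadd _ (hNxG k) _ (hGN γ hγ)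
  have hdir : ∀ f : ℂ ≃ₗᵢ[ℝ] ℂ,
      (∃ β > (0 : ℝ), ∀ z ∈ G, β • f z ∈ G) →
      (∃ β > (0 : ℝ), ∀ z ∈ L, β • f z ∈ L) := by
    rintro f ⟨β, hβ, hf⟩
    refine ⟨(N : ℝ) * β, by positivity, fun z hz => ?_⟩
    rw [hkey]
    exact hGL (hf _ (hNL z hz))
  refine ⟨hdir, Set.Subset.antisymm ?_ fun f hf => hdir f hf⟩
  rintro f ⟨β, hβ, hf⟩
  refine ⟨(N : ℝ) * β, by positivity, fun z hz => ?_⟩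
  have hzL : z ∈ L := hGL hz
  have h1 : β • f z ∈ L := hf z hzL
  have h2 : (N : ℂ) * (β • f z) ∈ G := hNL _ h1
  have h3 : ((N : ℝ) * β) • f z = (N : ℂ) * (β • f z) := by
    rw [Complex.real_smul, Complex.real_smul]; push_cast; ring
  rw [h3]; exact h2
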